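/- Let l ≥ 4, work in EuclideanSpace ℝ (Fin l) with standard orthonormal basis x₁, …, x_l, set α_i = x_i − x_{i+1} for 1 ≤ i ≤ l−1 and α_l = x_{l−1} + x_l, and set d₁ = d_{l−1} = d_l = 1 and d_i = 2 for 2 ≤ i ≤ l−2. For each j let e_j be the unique vector with ⟨e_j, α_i⟩ = δ_{ij}/d_j for all i. Then e₁ = x₁, e_j = (1/2) Σ_{k=1}^{j} x_k for 2 ≤ j ≤ l−2, e_{l−1} = (1/2)(Σ_{k=1}^{l−1} x_k − x_l), e_l = (1/2) Σ_{k=1}^{l} x_k, and max_{1≤j≤l} ‖e_j‖² = l/4. -/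

import Mathlib

open scoped RealInnerProductSpace

lemma euclid_sum_apply {l : ℕ} (S : Finset (Fin l)) (f : Fin l → EuclideanSpace ℝ (Fin l))
    (m : Fin l) : (∑ k ∈ S, f k) m = ∑ k ∈ S, f k m := by
  induction S using Finset.cons_induction with
  | empty => rfl
  | cons a s ha ih => rw [Finset.sum_cons, Finset.sum_cons, ← ih]; rfl

lemma euclid_normsq {l : ℕ} (v : EuclideanSpace ℝ (Fin l)) : ‖v‖ ^ 2 = ∑ i, v i ^ 2 := by
  rw [EuclideanSpace.norm_eq, Real.sq_sqrt (Finset.sum_nonneg fun i _ => sq_nonneg _)]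
  exact Finset.sum_congr rfl fun i _ => by rw [Real.norm_eq_abs, sq_abs]

/-- (2.13)–(2.14): the vertices `e_j` of the Cartan polyhedron facet for the root
system `d_l` (simple roots `α_i = x_i − x_{i+1}` for `i ≤ l−1`, `α_l = x_{l−1}+x_l`;
coefficients `d₁ = d_{l−1} = d_l = 1`, `d_i = 2` otherwise) and `max_j ‖e_j‖² = l/4`.
Indices are zero-based: `i : Fin l` corresponds to `i+1` in the one-based statement. -/
theorem stmt8 (l : ℕ) (hl : 4 ≤ l)
    (x : Fin l → EuclideanSpace ℝ (Fin l))
    (hx : ∀ i, x i = EuclideanSpace.single i (1 : ℝ))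
    (α : Fin l → EuclideanSpace ℝ (Fin l))
    (hα : ∀ i : Fin l, α i =
      if h : (i : ℕ) + 1 < l then x i - x ⟨(i : ℕ) + 1, h⟩
      else x ⟨l - 2, by omega⟩ + x ⟨l - 1, by omega⟩)
    (e : Fin l → EuclideanSpace ℝ (Fin l))
    (he : ∀ i j, ⟪e j, α i⟫ =
      if i = j then
        (if (j : ℕ) = 0 ∨ (j : ℕ) = l - 2 ∨ (j : ℕ) = l - 1 then (1 : ℝ) else 1 / 2)
      else 0) :
    e ⟨0, by omega⟩ = x ⟨0, by omega⟩ ∧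
    (∀ j : Fin l, 1 ≤ (j : ℕ) → (j : ℕ) ≤ l - 3 →
      e j = (1 / 2 : ℝ) •
        ∑ k ∈ Finset.univ.filter (fun k : Fin l => (k : ℕ) ≤ (j : ℕ)), x k) ∧
    e ⟨l - 2, by omega⟩ = (1 / 2 : ℝ) •
      ((∑ k ∈ Finset.univ.filter (fun k : Fin l => (k : ℕ) ≤ l - 2), x k) -
        x ⟨l - 1, by omega⟩) ∧
    e ⟨l - 1, by omega⟩ = (1 / 2 : ℝ) • ∑ k, x k ∧
    Finset.univ.sup' (Finset.univ_nonempty_iff.mpr ⟨⟨0, by omega⟩⟩)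
        (fun j : Fin l => ‖e j‖ ^ 2) = (l : ℝ) / 4 := by
  have hxc : ∀ (i : Fin l) (v : EuclideanSpace ℝ (Fin l)), ⟪v, x i⟫ = v i := by
    intro i v; rw [hx]; simp [EuclideanSpace.inner_single_right]
  set w : Fin l → ℝ := fun j =>
    if (j : ℕ) = 0 ∨ (j : ℕ) = l - 2 ∨ (j : ℕ) = l - 1 then (1 : ℝ) else 1 / 2 with hwdef
  have hd : ∀ (j : Fin l) (i : ℕ) (h1 : i + 1 < l),
      e j ⟨i, by omega⟩ - e j ⟨i + 1, h1⟩ = (if i = (j : ℕ) then w j else 0) := by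
    intro j i h1
    have h := he ⟨i, by omega⟩ j
    rw [hα ⟨i, by omega⟩] at h
    rw [dif_pos h1] at h
    rw [inner_sub_right, hxc, hxc] at h
    rw [h]
    simp only [Fin.ext_iff, Fin.val_mk, hwdef]
  have hlast : ∀ j : Fin l, e j ⟨l - 2, by omega⟩ + e j ⟨l - 1, by omega⟩ =
      (if (j : ℕ) = l - 1 then (1 : ℝ) else 0) := by
    intro j
    have h := he ⟨l - 1, by omega⟩ j
    rw [hα ⟨l - 1, by omega⟩] at h
    rw [dif_neg (by simp; omega)] at h
    rw [inner_add_right, hxc, hxc] at h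
    rw [h]
    by_cases hj : (j : ℕ) = l - 1
    · rw [if_pos hj, if_pos (by rw [Fin.ext_iff]; exact hj.symm), if_pos (by omega)]
    · rw [if_neg hj, if_neg (by rw [Fin.ext_iff]; simpa using fun hh => hj hh.symm)]
  have htel : ∀ (j : Fin l) (k : ℕ) (hk : k < l),
      e j ⟨0, by omega⟩ - e j ⟨k, hk⟩ = (if (j : ℕ) < k then w j else 0) := by
    intro j k
    induction k with
    | zero => intro hk; simp
    | succ n ih =>
      intro hk
      have h1 := ih (by omega)
      have h2 := hd j n hk
      have h3 : e j ⟨0, by omega⟩ - e j ⟨n + 1, hk⟩ =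
          (e j ⟨0, by omega⟩ - e j ⟨n, by omega⟩) +
          (e j ⟨n, by omega⟩ - e j ⟨n + 1, hk⟩) := by ring
      rw [h3, h1, h2]
      split_ifs <;> first | ring1 | (exfalso; omega)
  have hA : ∀ j : Fin l, e j ⟨0, by omega⟩ = (if (j : ℕ) = 0 then (1 : ℝ) else 1 / 2) := by
    intro j
    have h1 := htel j (l - 2) (by omega)
    have h2 := htel j (l - 1) (by omega)
    have h3 := hlast j
    have hjl := j.isLt
    by_cases c0 : (j : ℕ) = 0
    · have hw : w j = 1 := by simp [hwdef, c0]
      rw [if_pos (by omega), hw] at h1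
      rw [if_pos (by omega), hw] at h2
      rw [if_neg (by omega)] at h3
      rw [if_pos c0]; linarith
    by_cases cA : (j : ℕ) = l - 2
    · have hw : w j = 1 := by simp [hwdef, cA]
      rw [if_neg (by omega)] at h1
      rw [if_pos (by omega), hw] at h2
      rw [if_neg (by omega)] at h3
      rw [if_neg c0]; linarith
    by_cases cB : (j : ℕ) = l - 1
    · rw [if_neg (by omega)] at h1
      rw [if_neg (by omega)] at h2
      rw [if_pos cB] at h3
      rw [if_neg c0]; linarith
    · have hw : w j = 1 / 2 := by simp [hwdef, c0, cA, cB]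
      rw [if_pos (by omega), hw] at h1
      rw [if_pos (by omega), hw] at h2
      rw [if_neg cB] at h3
      rw [if_neg c0]; linarith
  have hco : ∀ j k : Fin l, e j k =
      (if (j : ℕ) = 0 then (1 : ℝ) else 1 / 2) -
      (if (j : ℕ) < (k : ℕ) then w j else 0) := by
    intro j k
    have h1 := htel j (k : ℕ) k.isLt
    have h2 := hA j
    rw [Fin.eta] at h1
    linarith
  have hl4 : (4 : ℝ) ≤ (l : ℝ) := by exact_mod_cast hl
  -- values of w at the special indices
  have hw0 : w ⟨0, by omega⟩ = 1 := by simp [hwdef]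
  have hwA : w ⟨l - 2, by omega⟩ = 1 := by simp [hwdef]
  have hwB : w ⟨l - 1, by omega⟩ = 1 := by simp [hwdef]
  -- generic sum-of-singles coordinate computation
  have hsum : ∀ (p : ℕ → Prop) [DecidablePred p] (m : Fin l),
      (∑ k ∈ Finset.univ.filter (fun k : Fin l => p (k : ℕ)), x k) m =
      (if p (m : ℕ) then (1 : ℝ) else 0) := by
    intro p _ m
    rw [euclid_sum_apply]
    have h1 : ∀ k ∈ Finset.univ.filter (fun k : Fin l => p (k : ℕ)),
        x k m = (if m = k then (1 : ℝ) else 0) := by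
      intro k _; rw [hx]; simp [EuclideanSpace.single_apply]
    rw [Finset.sum_congr rfl h1, Finset.sum_ite_eq]
    simp
  refine ⟨?_, ?_, ?_, ?_, ?_⟩
  · -- e 0 = x 0
    ext m
    rw [hco, hx, hw0]
    simp only [EuclideanSpace.single_apply, Fin.ext_iff, Fin.val_mk]
    split_ifs <;> first | (exfalso; omega) | norm_num
  · -- middle j
    intro j hj1 hj2
    have hjl := j.isLt
    have hw : w j = 1 / 2 := by
      have h : ¬((j : ℕ) = 0 ∨ (j : ℕ) = l - 2 ∨ (j : ℕ) = l - 1) := by omega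
      simp [hwdef, h]
    ext m
    have hs : ((1 / 2 : ℝ) •
        ∑ k ∈ Finset.univ.filter (fun k : Fin l => (k : ℕ) ≤ (j : ℕ)), x k) m =
        (1 / 2 : ℝ) * (∑ k ∈ Finset.univ.filter (fun k : Fin l => (k : ℕ) ≤ (j : ℕ)), x k) m := rfl
    rw [hco, hs, hsum (fun n => n ≤ (j : ℕ)) m, hw]
    split_ifs <;> first | (exfalso; omega) | norm_num
  · -- j = l - 2
    ext m
    have hml := m.isLt
    have hs : ((1 / 2 : ℝ) •
        ((∑ k ∈ Finset.univ.filter (fun k : Fin l => (k : ℕ) ≤ l - 2), x k) -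
          x ⟨l - 1, by omega⟩)) m =
        (1 / 2 : ℝ) *
        ((∑ k ∈ Finset.univ.filter (fun k : Fin l => (k : ℕ) ≤ l - 2), x k) m -
          x ⟨l - 1, by omega⟩ m) := rfl
    have hx1 : x ⟨l - 1, by omega⟩ m = (if (m : ℕ) = l - 1 then (1 : ℝ) else 0) := by
      rw [hx]; simp [EuclideanSpace.single_apply, Fin.ext_iff, eq_comm]
    rw [hco, hs, hsum (fun n => n ≤ l - 2) m, hx1, hwA]
    simp only [Fin.val_mk]
    split_ifs <;> first | (exfalso; omega) | norm_num
  · -- j = l - 1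
    ext m
    have hml := m.isLt
    have hs : ((1 / 2 : ℝ) • ∑ k, x k) m = (1 / 2 : ℝ) * (∑ k, x k) m := rfl
    have h1 : (∑ k, x k) m = (1 : ℝ) := by
      rw [euclid_sum_apply]
      have h2 : ∀ k ∈ (Finset.univ : Finset (Fin l)),
          x k m = (if m = k then (1 : ℝ) else 0) := by
        intro k _; rw [hx]; simp [EuclideanSpace.single_apply]
      rw [Finset.sum_congr rfl h2, Finset.sum_ite_eq]
      simp
    rw [hco, hs, h1, hwB]
    simp only [Fin.val_mk]
    split_ifs <;> first | (exfalso; omega) | norm_num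
  · -- the maximum
    have hnsq : ∀ j : Fin l, ‖e j‖ ^ 2 = ∑ i ∈ Finset.range l,
        ((if (j : ℕ) = 0 then (1 : ℝ) else 1 / 2) - (if (j : ℕ) < i then w j else 0)) ^ 2 := by
      intro j
      rw [euclid_normsq]
      rw [← Fin.sum_univ_eq_sum_range
        (fun i : ℕ => ((if (j : ℕ) = 0 then (1 : ℝ) else 1 / 2) -
          (if (j : ℕ) < i then w j else 0)) ^ 2) l]
      exact Finset.sum_congr rfl fun m _ => by rw [hco]
    have hval : ∀ j : Fin l, ‖e j‖ ^ 2 =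
        (if (j : ℕ) = 0 then (1 : ℝ)
         else if (j : ℕ) = l - 2 ∨ (j : ℕ) = l - 1 then (l : ℝ) / 4
         else ((j : ℕ) + 1 : ℝ) / 4) := by
      intro j
      have hjl := j.isLt
      rw [hnsq j]
      by_cases c0 : (j : ℕ) = 0
      · have hw : w j = 1 := by simp [hwdef, c0]
        have hterm : ∀ i ∈ Finset.range l,
            ((if (j : ℕ) = 0 then (1 : ℝ) else 1 / 2) -
              (if (j : ℕ) < i then w j else 0)) ^ 2 = (if i = 0 then (1 : ℝ) else 0) := by
          intro i _
          rw [if_pos c0, hw]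
          by_cases h : i = 0
          · rw [if_pos h, if_neg (by omega)]; norm_num
          · rw [if_neg h, if_pos (by omega)]; norm_num
        rw [Finset.sum_congr rfl hterm,
          Finset.sum_ite_eq' (Finset.range l) 0 (fun _ => (1 : ℝ)),
          if_pos (Finset.mem_range.mpr (by omega)), if_pos c0]
      by_cases cOr : (j : ℕ) = l - 2 ∨ (j : ℕ) = l - 1
      · have hw : w j = 1 := by
          rcases cOr with h | h <;> simp [hwdef, h]
        have hterm : ∀ i ∈ Finset.range l,
            ((if (j : ℕ) = 0 then (1 : ℝ) else 1 / 2) -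
              (if (j : ℕ) < i then w j else 0)) ^ 2 = (1 / 4 : ℝ) := by
          intro i _
          rw [if_neg c0, hw]
          split_ifs <;> norm_num
        rw [Finset.sum_congr rfl hterm, Finset.sum_const, Finset.card_range, nsmul_eq_mul,
          if_neg c0, if_pos cOr]
        ring
      · have hw : w j = 1 / 2 := by
          have h : ¬((j : ℕ) = 0 ∨ (j : ℕ) = l - 2 ∨ (j : ℕ) = l - 1) := by
            push_neg; push_neg at cOr; exact ⟨c0, cOr.1, cOr.2⟩
          simp [hwdef, h]
        have hterm : ∀ i ∈ Finset.range l,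
            ((if (j : ℕ) = 0 then (1 : ℝ) else 1 / 2) -
              (if (j : ℕ) < i then w j else 0)) ^ 2 = (if i ≤ (j : ℕ) then (1 / 4 : ℝ) else 0) := by
          intro i _
          rw [if_neg c0, hw]
          by_cases h : i ≤ (j : ℕ)
          · rw [if_neg (by omega), if_pos h]; norm_num
          · rw [if_pos (by omega), if_neg h]; norm_num
        have hfil : Finset.filter (fun i => i ≤ (j : ℕ)) (Finset.range l) =
            Finset.range ((j : ℕ) + 1) := by
          ext i; simp only [Finset.mem_filter, Finset.mem_range]; omega
        rw [Finset.sum_congr rfl hterm, ← Finset.sum_filter, hfil, Finset.sum_const,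
          Finset.card_range, nsmul_eq_mul, if_neg c0, if_neg cOr]
        push_cast; ring
    apply le_antisymm
    · apply Finset.sup'_le
      intro j _
      rw [hval j]
      have hjl : ((j : ℕ) : ℝ) + 1 ≤ (l : ℝ) := by exact_mod_cast j.isLt
      split_ifs <;> linarith
    · have hE : ‖e ⟨l - 1, by omega⟩‖ ^ 2 = (l : ℝ) / 4 := by
        rw [hval ⟨l - 1, by omega⟩]
        simp only [Fin.val_mk]
        rw [if_neg (by omega)]
        simp
      calc (l : ℝ) / 4 = ‖e ⟨l - 1, by omega⟩‖ ^ 2 := hE.symm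
        _ ≤ _ := Finset.le_sup' (fun j : Fin l => ‖e j‖ ^ 2) (Finset.mem_univ _)
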